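/- Let y be a random vector in ℝ^D with second moment matrix Σ = E[yy^⊤] ≠ 0 which is almost surely nonzero, let ŷ = y/‖y‖₂ and Σ̂ = E[ŷŷ^⊤], let r = tr(Σ)/‖Σ‖ and r̂ = 1/‖Σ̂‖. Then for any ε ∈ (0,1), ‖Σ̂‖ ≤ 1/(ε·r) + p(ε), where p(ε) = P{‖y‖₂² < ε·E‖y‖₂²}; consequently r̂ ≥ r/(ε^{−1} + r·p(ε)). -/

import Mathlib

open MeasureTheory ProbabilityTheory

noncomputable section

/-- Squared Euclidean norm of a vector. -/
def sqNorm {ι : Type*} [Fintype ι] (x : ι → ℝ) : ℝ := ∑ i, (x i) ^ 2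

/-- Euclidean norm of a vector. -/
def eNorm {ι : Type*} [Fintype ι] (x : ι → ℝ) : ℝ := Real.sqrt (sqNorm x)

/-- Unit normalization of a vector (junk value `0` when `x = 0`). -/
def unit {ι : Type*} [Fintype ι] (x : ι → ℝ) : ι → ℝ := (eNorm x)⁻¹ • x

/-- Squared Frobenius norm of a matrix. -/
def frobSq {α β : Type*} [Fintype α] [Fintype β] (A : Matrix α β ℝ) : ℝ :=
  ∑ i, ∑ j, (A i j) ^ 2

/-- The ℓ²→ℓ² operator norm of a matrix. -/
def opNorm {α β : Type*} [Fintype α] [Fintype β] (A : Matrix α β ℝ) : ℝ :=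
  sSup {c : ℝ | ∃ x : β → ℝ, eNorm x ≤ 1 ∧ c = eNorm (A.mulVec x)}

/-- The ∞-stable rank `‖A‖_F² / ‖A‖²`. -/
def rInf {α β : Type*} [Fintype α] [Fintype β] (A : Matrix α β ℝ) : ℝ :=
  frobSq A / (opNorm A) ^ 2

/-- The 4-stable rank `‖A‖_F⁴ / ‖AAᵀ‖_F²`. -/
def r4 {α β : Type*} [Fintype α] [Fintype β] (A : Matrix α β ℝ) : ℝ :=
  (frobSq A) ^ 2 / frobSq (A * A.transpose)

/-- The sub-gaussian (ψ₂) norm of a real random variable. -/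
def psi2 {Ω : Type*} [MeasurableSpace Ω] (μ : Measure Ω) (f : Ω → ℝ) : ℝ :=
  sInf {t : ℝ | 0 < t ∧ ∫ ω, Real.exp (f ω ^ 2 / t ^ 2) ∂μ ≤ 2}

/-- The entries of the random matrix `Z` are i.i.d. -/
def IIDEntries {Ω : Type*} [MeasurableSpace Ω] (μ : Measure Ω) {k D : ℕ}
    (Z : Ω → Matrix (Fin k) (Fin D) ℝ) : Prop :=
  (∀ p : Fin k × Fin D, Measurable fun ω => Z ω p.1 p.2) ∧
  iIndepFun (fun (p : Fin k × Fin D) ω => Z ω p.1 p.2) μ ∧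
  ∀ p q : Fin k × Fin D,
    IdentDistrib (fun ω => Z ω p.1 p.2) (fun ω => Z ω q.1 q.2) μ μ

/-- The entries of the random matrix `Z` are i.i.d., mean-zero, unit-variance
and sub-gaussian. -/
def GoodEntries {Ω : Type*} [MeasurableSpace Ω] (μ : Measure Ω) {k D : ℕ}
    (Z : Ω → Matrix (Fin k) (Fin D) ℝ) : Prop :=
  IIDEntries μ Z ∧
  (∀ i j, ∫ ω, Z ω i j ∂μ = 0) ∧
  (∀ i j, ∫ ω, (Z ω i j) ^ 2 ∂μ = 1) ∧
  (∀ i j, ∃ t : ℝ, 0 < t ∧ ∫ ω, Real.exp ((Z ω i j) ^ 2 / t ^ 2) ∂μ ≤ 2)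

/-- The two-sided Johnson–Lindenstrauss inequality for the pair `u, v`,
with tolerance `ε` and normalization `√(γ/k)`. -/
def JLPair {k D : ℕ} (ε γ : ℝ) (Z : Matrix (Fin k) (Fin D) ℝ) (u v : Fin D → ℝ) : Prop :=
  (1 - ε) * eNorm (u - v) ≤ Real.sqrt (γ / k) * eNorm (Z.mulVec (u - v)) ∧
  Real.sqrt (γ / k) * eNorm (Z.mulVec (u - v)) ≤ (1 + ε) * eNorm (u - v)

section Helpers

lemma sqNorm_nonneg {ι : Type*} [Fintype ι] (x : ι → ℝ) : 0 ≤ sqNorm x :=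
  Finset.sum_nonneg fun i _ => sq_nonneg _

lemma eNorm_nonneg {ι : Type*} [Fintype ι] (x : ι → ℝ) : 0 ≤ eNorm x := Real.sqrt_nonneg _

lemma eNorm_sq {ι : Type*} [Fintype ι] (x : ι → ℝ) : (eNorm x) ^ 2 = sqNorm x :=
  Real.sq_sqrt (sqNorm_nonneg x)

lemma sq_le_sqNorm {ι : Type*} [Fintype ι] (x : ι → ℝ) (i : ι) : (x i) ^ 2 ≤ sqNorm x :=
  Finset.single_le_sum (fun j _ => sq_nonneg (x j)) (Finset.mem_univ i)

lemma abs_le_eNorm {ι : Type*} [Fintype ι] (x : ι → ℝ) (i : ι) : |x i| ≤ eNorm x := by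
  rw [← Real.sqrt_sq_eq_abs]; exact Real.sqrt_le_sqrt (sq_le_sqNorm x i)

lemma eNorm_eq_zero {ι : Type*} [Fintype ι] {x : ι → ℝ} (h : x ≠ 0) : eNorm x ≠ 0 := by
  intro h0
  apply h
  funext i
  have hs : sqNorm x = 0 := by
    have := Real.sqrt_eq_zero (sqNorm_nonneg x) |>.mp h0
    exact this
  have h2 : (x i)^2 = 0 := le_antisymm (hs ▸ sq_le_sqNorm x i) (sq_nonneg _)
  exact pow_eq_zero_iff (two_ne_zero) |>.mp h2

lemma sqNorm_unit_le {ι : Type*} [Fintype ι] (x : ι → ℝ) : sqNorm (unit x) ≤ 1 := by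
  by_cases h : x = 0
  · subst h
    simp [unit, sqNorm]
  · have hn := eNorm_eq_zero h
    have : sqNorm (unit x) = ((eNorm x)⁻¹)^2 * sqNorm x := by
      simp [unit, sqNorm, Finset.mul_sum, mul_pow]
    rw [this, ← eNorm_sq x]
    field_simp
    exact le_rfl

lemma eNorm_unit_le {ι : Type*} [Fintype ι] (x : ι → ℝ) : eNorm (unit x) ≤ 1 := by
  rw [eNorm]
  exact Real.sqrt_le_one.mpr (sqNorm_unit_le x)

lemma sqNorm_unit_eq {ι : Type*} [Fintype ι] {x : ι → ℝ} (h : x ≠ 0) : sqNorm (unit x) = 1 := by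
  have hn := eNorm_eq_zero h
  have : sqNorm (unit x) = ((eNorm x)⁻¹)^2 * sqNorm x := by
    simp [unit, sqNorm, Finset.mul_sum, mul_pow]
  rw [this, ← eNorm_sq x]
  field_simp

lemma abs_unit_le_one {ι : Type*} [Fintype ι] (x : ι → ℝ) (i : ι) : |unit x i| ≤ 1 := by
  have h1 := abs_le_eNorm (unit x) i
  exact h1.trans (eNorm_unit_le x)

/-- dot product notation helper -/
lemma dot_le_eNorm_mul {ι : Type*} [Fintype ι] (x v : ι → ℝ) :
    ∑ i, x i * v i ≤ eNorm x * eNorm v := by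
  have h := Finset.sum_mul_sq_le_sq_mul_sq Finset.univ x v
  have h2 : (∑ i, x i * v i) ≤ |∑ i, x i * v i| := le_abs_self _
  refine h2.trans ?_
  rw [← Real.sqrt_sq_eq_abs]
  calc Real.sqrt ((∑ i, x i * v i)^2) ≤ Real.sqrt (sqNorm x * sqNorm v) :=
        Real.sqrt_le_sqrt h
    _ = eNorm x * eNorm v := Real.sqrt_mul (sqNorm_nonneg x) _

lemma eNorm_mulVec_le {α β : Type*} [Fintype α] [Fintype β] (A : Matrix α β ℝ) (x : β → ℝ)
    (hx : eNorm x ≤ 1) :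
    eNorm (A.mulVec x) ≤ Real.sqrt (∑ i, ∑ j, (A i j)^2) := by
  have hx2 : sqNorm x ≤ 1 := by
    have := eNorm_sq x
    nlinarith [eNorm_nonneg x]
  rw [eNorm]
  apply Real.sqrt_le_sqrt
  have : sqNorm (A.mulVec x) ≤ ∑ i, (∑ j, (A i j)^2) * sqNorm x := by
    apply Finset.sum_le_sum
    intro i _
    exact Finset.sum_mul_sq_le_sq_mul_sq Finset.univ (A i) x
  refine this.trans ?_
  calc ∑ i, (∑ j, (A i j)^2) * sqNorm x ≤ ∑ i, (∑ j, (A i j)^2) * 1 := by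
        apply Finset.sum_le_sum
        intro i _
        exact mul_le_mul_of_nonneg_left hx2 (Finset.sum_nonneg fun j _ => sq_nonneg _)
    _ = ∑ i, ∑ j, (A i j)^2 := by simp

lemma opNorm_bddAbove {α β : Type*} [Fintype α] [Fintype β] (A : Matrix α β ℝ) :
    BddAbove {c : ℝ | ∃ x : β → ℝ, eNorm x ≤ 1 ∧ c = eNorm (A.mulVec x)} := by
  refine ⟨Real.sqrt (∑ i, ∑ j, (A i j)^2), ?_⟩
  rintro c ⟨x, hx, rfl⟩
  exact eNorm_mulVec_le A x hx

lemma le_opNorm {α β : Type*} [Fintype α] [Fintype β] (A : Matrix α β ℝ) (x : β → ℝ)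
    (hx : eNorm x ≤ 1) : eNorm (A.mulVec x) ≤ opNorm A :=
  le_csSup (opNorm_bddAbove A) ⟨x, hx, rfl⟩

lemma opNorm_le {α β : Type*} [Fintype α] [Fintype β] (A : Matrix α β ℝ) {c : ℝ} (hc : 0 ≤ c)
    (h : ∀ x : β → ℝ, eNorm x ≤ 1 → eNorm (A.mulVec x) ≤ c) : opNorm A ≤ c := by
  apply Real.sSup_le _ hc
  rintro b ⟨x, hx, rfl⟩
  exact h x hx

lemma eNorm_single {ι : Type*} [Fintype ι] [DecidableEq ι] (j : ι) :
    eNorm (Pi.single j (1:ℝ)) = 1 := by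
  rw [eNorm]
  have : sqNorm (Pi.single j (1:ℝ)) = 1 := by
    rw [sqNorm]
    rw [Finset.sum_eq_single j]
    · simp
    · intro b _ hb; simp [Pi.single_apply, hb]
    · simp
  rw [this, Real.sqrt_one]

lemma entry_le_opNorm {α β : Type*} [Fintype α] [Fintype β] [DecidableEq β]
    (A : Matrix α β ℝ) (i : α) (j : β) : |A i j| ≤ opNorm A := by
  have h := le_opNorm A (Pi.single j 1) (le_of_eq (eNorm_single j))
  refine le_trans ?_ h
  have : A.mulVec (Pi.single j 1) i = A i j := by
    simp [Matrix.mulVec, dotProduct, Pi.single_apply, Finset.sum_eq_single j]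
  calc |A i j| = |(A.mulVec (Pi.single j 1)) i| := by rw [this]
    _ ≤ eNorm (A.mulVec (Pi.single j 1)) := abs_le_eNorm _ i

section Main
variable {Ω : Type*} [MeasurableSpace Ω] (μ : Measure Ω) [IsProbabilityMeasure μ]
  {D : ℕ} (y : Ω → Fin D → ℝ)

lemma meas_eval (hmeas : Measurable y) (i : Fin D) : Measurable fun ω => y ω i :=
  (measurable_pi_apply i).comp hmeas

lemma meas_sqNorm (hmeas : Measurable y) : Measurable fun ω => sqNorm (y ω) := by
  unfold sqNorm
  exact Finset.measurable_sum _ fun i _ => ((meas_eval y hmeas i).pow_const 2)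

lemma meas_unit (hmeas : Measurable y) (i : Fin D) : Measurable fun ω => unit (y ω) i := by
  have h1 : Measurable fun ω => eNorm (y ω) :=
    Real.continuous_sqrt.measurable.comp (meas_sqNorm y hmeas)
  have : (fun ω => unit (y ω) i) = fun ω => (eNorm (y ω))⁻¹ * y ω i := by
    funext ω; simp [unit]
  rw [this]
  exact h1.inv.mul (meas_eval y hmeas i)

lemma int_unit_mul (hmeas : Measurable y) (i j : Fin D) :
    Integrable (fun ω => unit (y ω) i * unit (y ω) j) μ := by
  refine ⟨((meas_unit y hmeas i).mul (meas_unit y hmeas j)).aestronglyMeasurable, ?_⟩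
  apply HasFiniteIntegral.of_bounded (C := 1)
  filter_upwards with ω
  rw [Real.norm_eq_abs, abs_mul]
  exact mul_le_one₀ (abs_unit_le_one _ i) (abs_nonneg _) (abs_unit_le_one _ j)

lemma int_dot_unit_sq (hmeas : Measurable y) (x : Fin D → ℝ) :
    Integrable (fun ω => (∑ i, x i * unit (y ω) i)^2) μ := by
  refine ⟨?_, ?_⟩
  · exact ((Finset.measurable_sum _ fun i _ =>
      (meas_unit y hmeas i).const_mul (x i)).pow_const 2).aestronglyMeasurable
  · apply HasFiniteIntegral.of_bounded (C := (eNorm x)^2)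
    filter_upwards with ω
    rw [Real.norm_eq_abs, abs_pow, sq_abs]
    have h1 : ∑ i, x i * unit (y ω) i ≤ eNorm x * eNorm (unit (y ω)) := dot_le_eNorm_mul _ _
    have h2 : -(∑ i, x i * unit (y ω) i) ≤ eNorm x * eNorm (unit (y ω)) := by
      have := dot_le_eNorm_mul x (-(unit (y ω)))
      have he : eNorm (-(unit (y ω))) = eNorm (unit (y ω)) := by
        simp [eNorm, sqNorm]
      simp only [Pi.neg_apply, mul_neg, Finset.sum_neg_distrib] at this
      rw [he] at this
      linarith
    have h3 : |∑ i, x i * unit (y ω) i| ≤ eNorm x * eNorm (unit (y ω)) := abs_le.mpr ⟨by linarith, h1⟩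
    have h4 : eNorm x * eNorm (unit (y ω)) ≤ eNorm x * 1 :=
      mul_le_mul_of_nonneg_left (eNorm_unit_le _) (eNorm_nonneg x)
    nlinarith [abs_nonneg (∑ i, x i * unit (y ω) i), eNorm_nonneg x]

lemma int_dot_y_sq (hint : ∀ i j : Fin D, Integrable (fun ω => y ω i * y ω j) μ) (x : Fin D → ℝ) :
    Integrable (fun ω => (∑ i, x i * y ω i)^2) μ := by
  have : (fun ω => (∑ i, x i * y ω i)^2)
      = fun ω => ∑ i, ∑ j, (x i * x j) * (y ω i * y ω j) := by
    funext ω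
    rw [sq, Finset.sum_mul_sum]
    congr 1; funext i; congr 1; funext j; ring
  rw [this]
  exact integrable_finset_sum _ fun i _ =>
    integrable_finset_sum _ fun j _ => ((hint i j).const_mul (x i * x j))


lemma quad_hat (hmeas : Measurable y)
    (SigHat : Matrix (Fin D) (Fin D) ℝ)
    (hSigHat : ∀ i j, SigHat i j = ∫ ω, unit (y ω) i * unit (y ω) j ∂μ)
    (a b : Fin D → ℝ) :
    ∑ i, a i * (SigHat.mulVec b) i
      = ∫ ω, (∑ i, a i * unit (y ω) i) * (∑ j, b j * unit (y ω) j) ∂μ := by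
  have key : ∀ ω, (∑ i, a i * unit (y ω) i) * (∑ j, b j * unit (y ω) j)
      = ∑ i, ∑ j, (a i * b j) * (unit (y ω) i * unit (y ω) j) := by
    intro ω
    rw [Finset.sum_mul_sum]
    congr 1; funext i; congr 1; funext j; ring
  have hI : ∀ i j : Fin D, Integrable (fun ω => (a i * b j) * (unit (y ω) i * unit (y ω) j)) μ :=
    fun i j => (int_unit_mul μ y hmeas i j).const_mul _
  calc ∑ i, a i * (SigHat.mulVec b) i
      = ∑ i, ∑ j, (a i * b j) * SigHat i j := by
        congr 1; funext i
        rw [Matrix.mulVec, dotProduct, Finset.mul_sum]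
        congr 1; funext j; ring
    _ = ∑ i, ∑ j, ∫ ω, (a i * b j) * (unit (y ω) i * unit (y ω) j) ∂μ := by
        congr 1; funext i; congr 1; funext j
        rw [hSigHat i j, MeasureTheory.integral_const_mul]
    _ = ∫ ω, ∑ i, ∑ j, (a i * b j) * (unit (y ω) i * unit (y ω) j) ∂μ := by
        rw [integral_finset_sum _ (fun i _ => integrable_finset_sum _ (fun j _ => hI i j))]
        congr 1; funext i
        rw [integral_finset_sum _ (fun j _ => hI i j)]
    _ = _ := by
        congr 1; funext ω; rw [key]

lemma quad_sig (hint : ∀ i j : Fin D, Integrable (fun ω => y ω i * y ω j) μ)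
    (Sig : Matrix (Fin D) (Fin D) ℝ)
    (hSig : ∀ i j, Sig i j = ∫ ω, y ω i * y ω j ∂μ)
    (x : Fin D → ℝ) :
    ∑ i, x i * (Sig.mulVec x) i = ∫ ω, (∑ i, x i * y ω i)^2 ∂μ := by
  have hI : ∀ i j : Fin D, Integrable (fun ω => (x i * x j) * (y ω i * y ω j)) μ :=
    fun i j => (hint i j).const_mul _
  calc ∑ i, x i * (Sig.mulVec x) i
      = ∑ i, ∑ j, (x i * x j) * Sig i j := by
        congr 1; funext i
        rw [Matrix.mulVec, dotProduct, Finset.mul_sum]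
        congr 1; funext j; ring
    _ = ∑ i, ∑ j, ∫ ω, (x i * x j) * (y ω i * y ω j) ∂μ := by
        congr 1; funext i; congr 1; funext j
        rw [hSig i j, MeasureTheory.integral_const_mul]
    _ = ∫ ω, ∑ i, ∑ j, (x i * x j) * (y ω i * y ω j) ∂μ := by
        rw [integral_finset_sum _ (fun i _ => integrable_finset_sum _ (fun j _ => hI i j))]
        congr 1; funext i
        rw [integral_finset_sum _ (fun j _ => hI i j)]
    _ = _ := by
        congr 1; funext ω
        rw [sq, Finset.sum_mul_sum]
        congr 1; funext i; congr 1; funext j; ring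

end Main

end Helpers

/-- Lemma: stable rank transfer under retraction to the
sphere. Let `y` be an a.s. nonzero random vector in `ℝ^D` with second moment
matrix `Σ ≠ 0`, let `ŷ = y/‖y‖₂` with `Σ̂ = E[ŷŷᵀ]`, `r = tr Σ/‖Σ‖` and
`r̂ = 1/‖Σ̂‖`. Then for any `ε ∈ (0,1)`,
`‖Σ̂‖ ≤ 1/(εr) + p(ε)` where `p(ε) = P{‖y‖₂² < ε E‖y‖₂²}`; consequently
`r̂ ≥ r/(ε⁻¹ + r p(ε))`. -/
theorem retraction_stable_rank_transfer
    {Ω : Type*} [MeasurableSpace Ω] (μ : Measure Ω) [IsProbabilityMeasure μ]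
    {D : ℕ} (y : Ω → Fin D → ℝ)
    (hmeas : Measurable y)
    (hne : ∀ᵐ ω ∂μ, y ω ≠ 0)
    (hint : ∀ i j : Fin D, Integrable (fun ω => y ω i * y ω j) μ)
    (Sig : Matrix (Fin D) (Fin D) ℝ)
    (hSig : ∀ i j, Sig i j = ∫ ω, y ω i * y ω j ∂μ)
    (hSigne : Sig ≠ 0)
    (SigHat : Matrix (Fin D) (Fin D) ℝ)
    (hSigHat : ∀ i j, SigHat i j = ∫ ω, unit (y ω) i * unit (y ω) j ∂μ)
    (r rHat : ℝ)
    (hr : r = (∑ i, Sig i i) / opNorm Sig)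
    (hrHat : rHat = 1 / opNorm SigHat)
    (ε : ℝ) (hε0 : 0 < ε) (hε1 : ε < 1) :
    opNorm SigHat ≤ 1 / (ε * r) +
        (μ {ω | sqNorm (y ω) < ε * ∫ ω', sqNorm (y ω') ∂μ}).toReal ∧
    r / (ε⁻¹ + r * (μ {ω | sqNorm (y ω) < ε * ∫ ω', sqNorm (y ω') ∂μ}).toReal) ≤ rHat := by
  -- notation
  set T : ℝ := ∫ ω', sqNorm (y ω') ∂μ with hTdef
  set A : Set Ω := {ω | sqNorm (y ω) < ε * T} with hAdef
  set p : ℝ := (μ A).toReal with hpdef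
  have hp0 : 0 ≤ p := ENNReal.toReal_nonneg
  have hA : MeasurableSet A := by
    exact (meas_sqNorm y hmeas) measurableSet_Iio
  -- integrability of sqNorm y
  have hintSq : Integrable (fun ω => sqNorm (y ω)) μ := by
    have : (fun ω => sqNorm (y ω)) = fun ω => ∑ i, y ω i * y ω i := by
      funext ω; unfold sqNorm; congr 1; funext i; ring
    rw [this]
    exact integrable_finset_sum _ fun i _ => hint i i
  -- trace of Sig = T
  have hTr : ∑ i, Sig i i = T := by
    rw [hTdef]
    have : (fun ω => sqNorm (y ω)) = fun ω => ∑ i, y ω i * y ω i := by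
      funext ω; unfold sqNorm; congr 1; funext i; ring
    rw [this, integral_finset_sum _ fun i _ => hint i i]
    congr 1; funext i; rw [hSig i i]
  -- some entry of Sig is nonzero
  obtain ⟨i0, j0, hij0⟩ : ∃ i j, Sig i j ≠ 0 := by
    by_contra h
    push_neg at h
    exact hSigne (by ext i j; exact h i j)
  -- opNorm Sig > 0
  have hOpPos : 0 < opNorm Sig := by
    have h1 := entry_le_opNorm Sig i0 j0
    have := abs_pos.mpr hij0
    linarith
  -- diagonal entries of Sig are nonneg
  have hdiag : ∀ i, 0 ≤ Sig i i := by
    intro i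
    rw [hSig i i]
    apply integral_nonneg
    intro ω; exact mul_self_nonneg _
  -- T > 0
  have hTpos : 0 < T := by
    rw [← hTr]
    rcases eq_or_lt_of_le (hdiag i0) with h | h
    · -- Sig i0 i0 = 0 would give y i0 = 0 a.e., contradicting Sig i0 j0 ≠ 0
      exfalso
      have hzero : (fun ω => y ω i0 * y ω i0) =ᵐ[μ] 0 := by
        have hi : ∫ ω, y ω i0 * y ω i0 ∂μ = 0 := by rw [← hSig i0 i0, ← h]
        have := (integral_eq_zero_iff_of_nonneg (fun ω => mul_self_nonneg (y ω i0))
          (hint i0 i0)).mp hi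
        exact this
      have : (fun ω => y ω i0 * y ω j0) =ᵐ[μ] 0 := by
        filter_upwards [hzero] with ω hω
        have : y ω i0 * y ω i0 = 0 := hω
        have hy0 : y ω i0 = 0 := by nlinarith [mul_self_nonneg (y ω i0)]
        simp [hy0]
      have : Sig i0 j0 = 0 := by
        rw [hSig i0 j0, integral_congr_ae this]
        simp
      exact hij0 this
    · calc (0:ℝ) < Sig i0 i0 := h
        _ ≤ ∑ i, Sig i i := Finset.single_le_sum (fun i _ => hdiag i) (Finset.mem_univ i0)
  -- r > 0 and r = T / opNorm Sig
  have hrT : r = T / opNorm Sig := by rw [hr, hTr]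
  have hrpos : 0 < r := by rw [hrT]; positivity
  -- the bound B
  set B : ℝ := 1 / (ε * r) + p with hBdef
  have hBeq : B = opNorm Sig / (ε * T) + p := by
    rw [hBdef, hrT]
    field_simp
  have hB0 : 0 ≤ B := by
    rw [hBdef]; positivity
  -- quadratic form bound
  have Qbound : ∀ x : Fin D → ℝ, eNorm x ≤ 1 →
      ∫ ω, (∑ i, x i * unit (y ω) i)^2 ∂μ ≤ B := by
    intro x hx
    have hx2 : sqNorm x ≤ 1 := by
      have := eNorm_sq x
      nlinarith [eNorm_nonneg x]
    -- pointwise bound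
    have hpt : ∀ ω, (∑ i, x i * unit (y ω) i)^2
        ≤ (ε * T)⁻¹ * (∑ i, x i * y ω i)^2 + A.indicator (fun _ => (1:ℝ)) ω := by
      intro ω
      by_cases hω : ω ∈ A
      · have h1 : (∑ i, x i * unit (y ω) i)^2 ≤ sqNorm x * sqNorm (unit (y ω)) :=
          Finset.sum_mul_sq_le_sq_mul_sq Finset.univ x (unit (y ω))
        have h2 : sqNorm x * sqNorm (unit (y ω)) ≤ 1 := by
          have := sqNorm_unit_le (y ω)
          have := sqNorm_nonneg (unit (y ω))
          nlinarith [sqNorm_nonneg x]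
        have h3 : A.indicator (fun _ => (1:ℝ)) ω = 1 := Set.indicator_of_mem hω _
        have h4 : 0 ≤ (ε * T)⁻¹ * (∑ i, x i * y ω i)^2 := by positivity
        linarith
      · have hge : ε * T ≤ sqNorm (y ω) := by
          simpa [hAdef, not_lt] using hω
        have hsqpos : 0 < sqNorm (y ω) := lt_of_lt_of_le (by positivity) hge
        have hyne : y ω ≠ 0 := by
          intro h0
          rw [h0] at hsqpos
          simp [sqNorm] at hsqpos
        have hEn : eNorm (y ω) ≠ 0 := eNorm_eq_zero hyne
        have heq : (∑ i, x i * unit (y ω) i)^2 = (sqNorm (y ω))⁻¹ * (∑ i, x i * y ω i)^2 := by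
          have : ∑ i, x i * unit (y ω) i = (eNorm (y ω))⁻¹ * ∑ i, x i * y ω i := by
            rw [Finset.mul_sum]
            congr 1; funext i; simp [unit]; ring
          rw [this, mul_pow, ← eNorm_sq (y ω)]
          rw [inv_pow]
        have h3 : A.indicator (fun _ => (1:ℝ)) ω = 0 := Set.indicator_of_notMem hω _
        rw [heq, h3, add_zero]
        apply mul_le_mul_of_nonneg_right _ (sq_nonneg _)
        exact inv_anti₀ (by positivity) hge
    -- integrate
    have hIind : Integrable (A.indicator (fun _ => (1:ℝ))) μ :=
      (integrable_const (1:ℝ)).indicator hA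
    have hImono := integral_mono (int_dot_unit_sq μ y hmeas x)
      (((int_dot_y_sq μ y hint x).const_mul ((ε * T)⁻¹)).add hIind) hpt
    have hsplit : ∫ ω, ((ε * T)⁻¹ * (∑ i, x i * y ω i)^2 + A.indicator (fun _ => (1:ℝ)) ω) ∂μ
        = (ε * T)⁻¹ * (∫ ω, (∑ i, x i * y ω i)^2 ∂μ) + p := by
      rw [integral_add ((int_dot_y_sq μ y hint x).const_mul _) hIind,
        MeasureTheory.integral_const_mul]
      congr 1
      rw [integral_indicator_const _ hA, smul_eq_mul, mul_one, hpdef]; rfl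
    simp only [Pi.add_apply] at hImono
    rw [hsplit] at hImono
    -- bound ∫ ⟨x,y⟩² by opNorm Sig
    have hquad : ∫ ω, (∑ i, x i * y ω i)^2 ∂μ ≤ opNorm Sig := by
      rw [← quad_sig μ y hint Sig hSig x]
      calc ∑ i, x i * (Sig.mulVec x) i ≤ eNorm x * eNorm (Sig.mulVec x) :=
            dot_le_eNorm_mul _ _
        _ ≤ 1 * opNorm Sig := by
            apply mul_le_mul hx (le_opNorm Sig x hx) (eNorm_nonneg _) zero_le_one
        _ = opNorm Sig := one_mul _
    have : (ε * T)⁻¹ * (∫ ω, (∑ i, x i * y ω i)^2 ∂μ) ≤ (ε * T)⁻¹ * opNorm Sig :=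
      mul_le_mul_of_nonneg_left hquad (by positivity)
    rw [hBeq]
    calc ∫ ω, (∑ i, x i * unit (y ω) i)^2 ∂μ
        ≤ (ε * T)⁻¹ * (∫ ω, (∑ i, x i * y ω i)^2 ∂μ) + p := hImono
      _ ≤ (ε * T)⁻¹ * opNorm Sig + p := by linarith
      _ = opNorm Sig / (ε * T) + p := by rw [div_eq_inv_mul]
  -- opNorm SigHat ≤ B
  have hmain : opNorm SigHat ≤ B := by
    apply opNorm_le SigHat hB0
    intro x hx
    set v : Fin D → ℝ := SigHat.mulVec x with hv
    by_cases hv0 : v = 0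
    · rw [hv0]
      have : eNorm (0 : Fin D → ℝ) = 0 := by simp [eNorm, sqNorm]
      rw [this]; exact hB0
    · have hEn : eNorm v ≠ 0 := eNorm_eq_zero hv0
      set z : Fin D → ℝ := unit v with hz
      have hz1 : eNorm z ≤ 1 := eNorm_unit_le v
      have hnorm : eNorm v = ∑ i, z i * v i := by
        have : ∑ i, z i * v i = (eNorm v)⁻¹ * sqNorm v := by
          rw [sqNorm, Finset.mul_sum]
          apply Finset.sum_congr rfl
          intro i _
          simp [hz, unit]
          ring
        rw [this, ← eNorm_sq v]
        field_simp
      rw [hnorm]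
      have hid := quad_hat μ y hmeas SigHat hSigHat z x
      rw [← hv] at hid
      rw [hid]
      have hIz := int_dot_unit_sq μ y hmeas z
      have hIx := int_dot_unit_sq μ y hmeas x
      have hpt : ∀ ω, (∑ i, z i * unit (y ω) i) * (∑ j, x j * unit (y ω) j)
          ≤ ((∑ i, z i * unit (y ω) i)^2 + (∑ i, x i * unit (y ω) i)^2) / 2 := by
        intro ω
        nlinarith [sq_nonneg ((∑ i, z i * unit (y ω) i) - (∑ i, x i * unit (y ω) i))]
      have hprod : Integrable
          (fun ω => (∑ i, z i * unit (y ω) i) * (∑ j, x j * unit (y ω) j)) μ := by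
        have heq : (fun ω => (∑ i, z i * unit (y ω) i) * (∑ j, x j * unit (y ω) j))
            = fun ω => ∑ i, ∑ j, (z i * x j) * (unit (y ω) i * unit (y ω) j) := by
          funext ω
          rw [Finset.sum_mul_sum]
          congr 1; funext i; congr 1; funext j; ring
        rw [heq]
        exact integrable_finset_sum _ fun i _ => integrable_finset_sum _ fun j _ =>
          (int_unit_mul μ y hmeas i j).const_mul _
      calc ∫ ω, (∑ i, z i * unit (y ω) i) * (∑ j, x j * unit (y ω) j) ∂μ
          ≤ ∫ ω, ((∑ i, z i * unit (y ω) i)^2 + (∑ i, x i * unit (y ω) i)^2) / 2 ∂μ :=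
            integral_mono hprod ((hIz.add hIx).div_const 2) hpt
        _ = ((∫ ω, (∑ i, z i * unit (y ω) i)^2 ∂μ) + ∫ ω, (∑ i, x i * unit (y ω) i)^2 ∂μ) / 2 := by
            rw [integral_div, integral_add hIz hIx]
        _ ≤ (B + B) / 2 := by
            gcongr
            · exact Qbound z hz1
            · exact Qbound x hx
        _ = B := by ring
  refine ⟨hmain, ?_⟩
  -- second conclusion
  -- trace of SigHat = 1
  have hdiagHat : ∀ i, 0 ≤ SigHat i i := by
    intro i
    rw [hSigHat i i]
    apply integral_nonneg
    intro ω; exact mul_self_nonneg _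
  have htrHat : ∑ i, SigHat i i = 1 := by
    have : ∑ i, SigHat i i = ∫ ω, ∑ i, unit (y ω) i * unit (y ω) i ∂μ := by
      rw [integral_finset_sum _ fun i _ => int_unit_mul μ y hmeas i i]
      congr 1; funext i; rw [hSigHat i i]
    rw [this]
    have hae : (fun ω => ∑ i, unit (y ω) i * unit (y ω) i) =ᵐ[μ] fun _ => (1:ℝ) := by
      filter_upwards [hne] with ω hω
      have : ∑ i, unit (y ω) i * unit (y ω) i = sqNorm (unit (y ω)) := by
        unfold sqNorm; congr 1; funext i; ring
      rw [this, sqNorm_unit_eq hω]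
    rw [integral_congr_ae hae]
    simp
  obtain ⟨i1, hi1⟩ : ∃ i, 0 < SigHat i i := by
    by_contra h
    push_neg at h
    have : ∑ i, SigHat i i ≤ 0 := Finset.sum_nonpos fun i _ => h i
    rw [htrHat] at this
    linarith
  have hOpHatPos : 0 < opNorm SigHat := by
    have h1 := entry_le_opNorm SigHat i1 i1
    have : |SigHat i1 i1| = SigHat i1 i1 := abs_of_pos hi1
    linarith
  have hBpos : 0 < B := lt_of_lt_of_le hOpHatPos hmain
  have hXpos : 0 < ε⁻¹ + r * p := by positivity
  have hBform : r / (ε⁻¹ + r * p) = 1 / B := by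
    rw [div_eq_div_iff hXpos.ne' hBpos.ne', hBdef]
    field_simp
  rw [hrHat, hBform]
  exact one_div_le_one_div_of_le hOpHatPos hmain
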